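/- Consider the thorn cycle C*_3 obtained from the triangle v_1 v_2 v_3 by attaching t_i ≥ 1 pendant vertices to v_i for each i. Then χ(C*_3) = 3, exactly the three vertices v_1, v_2, v_3 yield rainbow neighbourhoods under the colouring where v_i gets colour c_i and each pendant vertex gets a colour different from its support vertex, and the set of all t_1 + t_2 + t_3 pendant vertices is a fade set; hence the fading number of C*_3 with respect to this colouring is at least t_1 + t_2 + t_3. -/

import Mathlib

/-- The closed neighbourhood of `u` as a finset. -/
def closedNbr {V : Type*} [Fintype V] [DecidableEq V] (G : SimpleGraph V)
    [DecidableRel G.Adj] (u : V) : Finset V :=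
  insert u (G.neighborFinset u)

/-- `u` yields a rainbow neighbourhood: `N[u]` meets every colour class. -/
def YieldsRainbow {V : Type*} [Fintype V] [DecidableEq V] (G : SimpleGraph V)
    [DecidableRel G.Adj] {k : ℕ} (c : V → Fin k) (u : V) : Prop :=
  ∀ i : Fin k, ∃ v ∈ closedNbr G u, c v = i

/-- `F` is a fade set: every rainbow-yielding vertex still sees every colour
on vertices outside `F`. -/
def IsFadeSet {V : Type*} [Fintype V] [DecidableEq V] (G : SimpleGraph V)
    [DecidableRel G.Adj] {k : ℕ} (c : V → Fin k) (F : Finset V) : Prop :=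
  ∀ u : V, YieldsRainbow G c u →
    ∀ i : Fin k, ∃ v ∈ closedNbr G u, c v = i ∧ v ∉ F

/-- The fading number: the maximum cardinality of a fade set. -/
noncomputable def fadingNumber {V : Type*} [Fintype V] [DecidableEq V]
    (G : SimpleGraph V) [DecidableRel G.Adj] {k : ℕ} (c : V → Fin k) : ℕ :=
  sSup {m | ∃ F : Finset V, IsFadeSet G c F ∧ F.card = m}

/-- The thorn cycle `C*₃`: a triangle on `Fin 3` with `t i` pendant vertices
attached to the `i`-th triangle vertex. -/
def thornC3 (t : Fin 3 → ℕ) : SimpleGraph (Fin 3 ⊕ Σ i : Fin 3, Fin (t i)) where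
  Adj u v :=
    match u, v with
    | .inl a, .inl b => a ≠ b
    | .inl a, .inr p => a = p.1
    | .inr p, .inl a => a = p.1
    | .inr _, .inr _ => False
  symm := by
    constructor
    intro u v h
    match u, v with
    | .inl a, .inl b => exact fun he => h he.symm
    | .inl a, .inr p => exact h
    | .inr p, .inl a => exact h
    | .inr _, .inr _ => exact h.elim
  loopless := by
    constructor
    intro u h
    match u with
    | .inl a => exact h rfl
    | .inr p => exact h

instance thornC3.decAdj (t : Fin 3 → ℕ) : DecidableRel (thornC3 t).Adj
  | .inl a, .inl b => inferInstanceAs (Decidable (a ≠ b))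
  | .inl a, .inr p => inferInstanceAs (Decidable (a = p.1))
  | .inr p, .inl a => inferInstanceAs (Decidable (a = p.1))
  | .inr _, .inr _ => inferInstanceAs (Decidable False)

theorem stmt_16 (t : Fin 3 → ℕ) (ht : ∀ i, 1 ≤ t i)
    (p : ∀ i : Fin 3, Fin (t i) → Fin 3) (hp : ∀ i j, p i j ≠ i) :
    (thornC3 t).chromaticNumber = 3 ∧
    (∀ u : Fin 3 ⊕ Σ i : Fin 3, Fin (t i),
      YieldsRainbow (thornC3 t) (Sum.elim id (fun s => p s.1 s.2)) u ↔
        ∃ i : Fin 3, u = Sum.inl i) ∧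
    IsFadeSet (thornC3 t) (Sum.elim id (fun s => p s.1 s.2))
      ((Finset.univ : Finset (Σ i : Fin 3, Fin (t i))).map
        ⟨Sum.inr, Sum.inr_injective⟩) ∧
    (∑ i : Fin 3, t i) ≤
      fadingNumber (thornC3 t) (Sum.elim id (fun s => p s.1 s.2)) := by
  set c : (Fin 3 ⊕ Σ i : Fin 3, Fin (t i)) → Fin 3 := Sum.elim id (fun s => p s.1 s.2) with hc
  have hcol : (thornC3 t).Coloring (Fin 3) := by
    refine SimpleGraph.Coloring.mk c ?_
    rintro (a|s) (b|s) hadj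
    · exact hadj
    · exact fun h => hp s.1 s.2 (h.symm.trans hadj.symm)
    · exact fun h => hp s.1 s.2 (h.trans hadj.symm)
    · exact hadj.elim
  have hrb : ∀ u, YieldsRainbow (thornC3 t) c u ↔ ∃ i : Fin 3, u = Sum.inl i := by
    rintro (a|s)
    · simp only [iff_true_intro (⟨a, rfl⟩ : ∃ i : Fin 3, Sum.inl a = Sum.inl i), iff_true]
      intro i
      refine ⟨Sum.inl i, ?_, rfl⟩
      simp only [closedNbr, Finset.mem_insert, SimpleGraph.mem_neighborFinset]
      by_cases h : i = a
      · exact Or.inl (by rw [h])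
      · exact Or.inr (show (thornC3 t).Adj (Sum.inl a) (Sum.inl i) from fun he => h he.symm)
    · have hne : ¬ ∃ i : Fin 3, (Sum.inr s : Fin 3 ⊕ Σ i : Fin 3, Fin (t i)) = Sum.inl i := by
        rintro ⟨i, h⟩; cases h
      simp only [iff_false_intro hne, iff_false]
      intro hY
      obtain ⟨i, hi1, hi2⟩ : ∃ i : Fin 3, i ≠ s.1 ∧ i ≠ p s.1 s.2 :=
        (by decide : ∀ a b : Fin 3, ∃ i, i ≠ a ∧ i ≠ b) s.1 (p s.1 s.2)
      obtain ⟨v, hv, hcv⟩ := hY i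
      simp only [closedNbr, Finset.mem_insert, SimpleGraph.mem_neighborFinset] at hv
      rcases hv with h | h
      · subst h; exact hi2 hcv.symm
      · match v, h with
        | Sum.inl a, h =>
          cases (h : a = s.1)
          exact hi1 hcv.symm
        | Sum.inr q, h => exact (h : False)
  have hfade : IsFadeSet (thornC3 t) c
      ((Finset.univ : Finset (Σ i : Fin 3, Fin (t i))).map ⟨Sum.inr, Sum.inr_injective⟩) := by
    intro u hu i
    obtain ⟨a, rfl⟩ := (hrb u).mp hu
    refine ⟨Sum.inl i, ?_, rfl, by simp⟩
    simp only [closedNbr, Finset.mem_insert, SimpleGraph.mem_neighborFinset]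
    by_cases h : i = a
    · exact Or.inl (by rw [h])
    · exact Or.inr (show (thornC3 t).Adj (Sum.inl a) (Sum.inl i) from fun he => h he.symm)
  have hcard : (((Finset.univ : Finset (Σ i : Fin 3, Fin (t i))).map
      ⟨Sum.inr, Sum.inr_injective⟩ : Finset (Fin 3 ⊕ Σ i : Fin 3, Fin (t i)))).card
      = ∑ i : Fin 3, t i := by
    simp [Finset.card_map, Finset.card_univ, Fintype.card_sigma]
  refine ⟨?_, hrb, hfade, ?_⟩
  · refine le_antisymm ?_ ?_
    · have := hcol.colorable.chromaticNumber_le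
      simpa using this
    · have hclique : (thornC3 t).IsClique ({Sum.inl 0, Sum.inl 1, Sum.inl 2} :
          Finset (Fin 3 ⊕ Σ i : Fin 3, Fin (t i))) := by
        intro x hx y hy hxy
        simp only [Finset.coe_insert, Set.mem_insert_iff, Finset.coe_singleton,
          Set.mem_singleton_iff] at hx hy
        rcases hx with rfl|rfl|rfl <;> rcases hy with rfl|rfl|rfl <;>
          first
          | exact absurd rfl hxy
          | exact (show (thornC3 t).Adj _ _ from by intro h; exact absurd (congrArg Sum.inl h) hxy)
      have h3 := hclique.card_le_chromaticNumber
      have hcard3 : ({Sum.inl 0, Sum.inl 1, Sum.inl 2} :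
          Finset (Fin 3 ⊕ Σ i : Fin 3, Fin (t i))).card = 3 := by
        rw [Finset.card_insert_of_notMem (by simp), Finset.card_insert_of_notMem (by simp),
          Finset.card_singleton]
      rw [hcard3] at h3
      exact_mod_cast h3
  · apply le_csSup
    · refine ⟨Fintype.card (Fin 3 ⊕ Σ i : Fin 3, Fin (t i)), ?_⟩
      rintro m ⟨F, _, rfl⟩
      exact F.card_le_univ.trans (le_of_eq Finset.card_univ)
    · exact ⟨_, hfade, hcard⟩
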